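/- Let H be a Hilbert space and T : H → H a bounded linear operator that is non-expansive (‖T‖ ≤ 1) and asymptotically regular, and such that 1 is not an eigenvalue of T (i.e. ker(I − T) = {0}). Given z ∈ H, define the affine map S : H → H by S x = T x + z, and suppose S has a fixed point x̄ (i.e. x̄ = T x̄ + z). Then x̄ is the unique fixed point of S, and for every x₀ ∈ H the sequence of iterates S^k x₀ converges to x̄. -/

import Mathlib

open Filter

/-- If `A` is non-expansive and fixes `x`, then its adjoint fixes `x`. -/
lemma fix_of_adjoint_fix' {𝕜 H : Type*} [RCLike 𝕜] [NormedAddCommGroup H]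
    [InnerProductSpace 𝕜 H] [CompleteSpace H] (A : H →L[𝕜] H) (hA : ‖A‖ ≤ 1)
    (x : H) (hx : A x = x) : ContinuousLinearMap.adjoint A x = x := by
  have h1 : RCLike.re (inner (𝕜 := 𝕜) (ContinuousLinearMap.adjoint A x) x) = ‖x‖ ^ 2 := by
    rw [ContinuousLinearMap.adjoint_inner_left, hx]
    exact inner_self_eq_norm_sq (𝕜 := 𝕜) x
  have h2 : ‖ContinuousLinearMap.adjoint A x‖ ≤ ‖x‖ := by
    calc ‖ContinuousLinearMap.adjoint A x‖ ≤ ‖ContinuousLinearMap.adjoint A‖ * ‖x‖ :=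
          (ContinuousLinearMap.adjoint A).le_opNorm x
      _ ≤ 1 * ‖x‖ := by
          gcongr
          rw [ContinuousLinearMap.adjoint.norm_map]
          exact hA
      _ = ‖x‖ := one_mul _
  have h3 : ‖ContinuousLinearMap.adjoint A x - x‖ ^ 2 ≤ 0 := by
    rw [norm_sub_sq (𝕜 := 𝕜), h1]
    nlinarith [norm_nonneg x, norm_nonneg (ContinuousLinearMap.adjoint A x)]
  have h4 : ‖ContinuousLinearMap.adjoint A x - x‖ = 0 := by
    nlinarith [norm_nonneg (ContinuousLinearMap.adjoint A x - x)]
  have := norm_eq_zero.mp h4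
  exact sub_eq_zero.mp this

/-- If `T` is linear, non-expansive, asymptotically regular and `1` is not an
eigenvalue of `T`, then for the affine map `S x = T x + z` with fixed point `x̄`,
the fixed point is unique and all iterates `S^[k] x₀` converge to it. -/
theorem stmt_1 {𝕜 H : Type*} [RCLike 𝕜] [NormedAddCommGroup H] [InnerProductSpace 𝕜 H]
    [CompleteSpace H] (T : H →L[𝕜] H) (hT : ‖T‖ ≤ 1)
    (hreg : ∀ x : H, Tendsto (fun k : ℕ => ‖(T ^ (k + 1)) x - (T ^ k) x‖) atTop (nhds 0))
    (hker : LinearMap.ker (((1 : H →L[𝕜] H) - T : H →L[𝕜] H) : H →ₗ[𝕜] H) = ⊥)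
    (z xbar : H) (hfix : xbar = T xbar + z) :
    (∀ y : H, y = T y + z → y = xbar) ∧
      ∀ x₀ : H, Tendsto (fun k : ℕ => (fun x => T x + z)^[k] x₀) atTop (nhds xbar) := by
  have hkerT : ∀ v : H, T v = v → v = 0 := by
    intro v hv
    have hmem : v ∈ LinearMap.ker (((1 : H →L[𝕜] H) - T : H →L[𝕜] H) : H →ₗ[𝕜] H) := by
      simp [LinearMap.mem_ker, ContinuousLinearMap.sub_apply, hv]
    rw [hker] at hmem
    simpa using hmem
  -- uniqueness
  have huniq : ∀ y : H, y = T y + z → y = xbar := by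
    intro y hy
    have hzy : z = y - T y := eq_sub_of_add_eq' hy.symm
    have hzx : z = xbar - T xbar := eq_sub_of_add_eq' hfix.symm
    have hdiff : T (y - xbar) = y - xbar := by
      rw [map_sub]
      have h := hzy.symm.trans hzx
      have : y - T y - (xbar - T xbar) = 0 := by rw [h]; abel
      have h2 : y - xbar - (T y - T xbar) = 0 := by
        rw [sub_sub_sub_comm] at this ⊢
        rw [sub_sub_sub_comm] at this
        abel_nf at this ⊢
        linear_combination (norm := abel_nf) this
      have := sub_eq_zero.mp h2
      exact this.symm
    have := hkerT (y - xbar) hdiff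
    exact sub_eq_zero.mp this
  refine ⟨huniq, ?_⟩
  -- powers are non-expansive
  have hnorm : ∀ (k : ℕ) (x : H), ‖(T ^ k) x‖ ≤ ‖x‖ := by
    intro k
    induction k with
    | zero => intro x; simp
    | succ n ih =>
        intro x
        rw [pow_succ, ContinuousLinearMap.mul_apply]
        calc ‖(T ^ n) (T x)‖ ≤ ‖T x‖ := ih (T x)
          _ ≤ ‖T‖ * ‖x‖ := T.le_opNorm x
          _ ≤ 1 * ‖x‖ := by gcongr
          _ = ‖x‖ := one_mul _
  -- on the range of (1 - T), powers tend to 0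
  have hrange : ∀ u : H, Tendsto (fun k : ℕ => (T ^ k) (u - T u)) atTop (nhds 0) := by
    intro u
    rw [tendsto_zero_iff_norm_tendsto_zero]
    have : (fun k : ℕ => ‖(T ^ k) (u - T u)‖) =
        fun k : ℕ => ‖(T ^ (k + 1)) u - (T ^ k) u‖ := by
      funext k
      rw [map_sub, ← ContinuousLinearMap.mul_apply, ← pow_succ, norm_sub_rev]
    rw [this]
    exact hreg u
  -- the range of (1 - T) is dense
  have hdense : Dense (Set.range fun u : H => u - T u) := by
    set A : H →L[𝕜] H := (1 : H →L[𝕜] H) - T with hA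
    have hKorth : (LinearMap.range (A : H →ₗ[𝕜] H))ᗮ = ⊥ := by
      rw [Submodule.eq_bot_iff]
      intro x hx
      have hxin : ∀ u : H, inner (𝕜 := 𝕜) (A u) x = 0 := by
        intro u
        exact hx (A u) (LinearMap.mem_range_self (A : H →ₗ[𝕜] H) u)
      have hadj : ContinuousLinearMap.adjoint T x = x := by
        have key : ∀ u : H, inner (𝕜 := 𝕜) u (x - ContinuousLinearMap.adjoint T x) = 0 := by
          intro u
          have h := hxin u
          rw [hA] at h
          simp only [ContinuousLinearMap.sub_apply, ContinuousLinearMap.one_apply,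
            inner_sub_left] at h
          rw [inner_sub_right, ContinuousLinearMap.adjoint_inner_right]
          rw [sub_eq_zero] at h ⊢
          exact h
        have := key (x - ContinuousLinearMap.adjoint T x)
        have := inner_self_eq_zero.mp this
        rw [sub_eq_zero] at this
        exact this.symm
      have hTfix : T x = x := by
        have hadjnorm : ‖ContinuousLinearMap.adjoint T‖ ≤ 1 := by
          rw [ContinuousLinearMap.adjoint.norm_map]; exact hT
        have := fix_of_adjoint_fix' (ContinuousLinearMap.adjoint T) hadjnorm x hadj
        rwa [ContinuousLinearMap.adjoint_adjoint] at this
      exact hkerT x hTfix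
    have htop : (LinearMap.range (A : H →ₗ[𝕜] H)).topologicalClosure = ⊤ :=
      Submodule.topologicalClosure_eq_top_iff.mpr hKorth
    have hd : Dense ((LinearMap.range (A : H →ₗ[𝕜] H) : Submodule 𝕜 H) : Set H) :=
      Submodule.dense_iff_topologicalClosure_eq_top.mpr htop
    have hset : (Set.range fun u : H => u - T u) =
        ((LinearMap.range (A : H →ₗ[𝕜] H) : Submodule 𝕜 H) : Set H) := by
      ext v
      simp only [Set.mem_range, SetLike.mem_coe, LinearMap.mem_range]
      constructor
      · rintro ⟨u, rfl⟩
        exact ⟨u, by simp [hA, ContinuousLinearMap.sub_apply]⟩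
      · rintro ⟨u, rfl⟩
        exact ⟨u, by simp [hA, ContinuousLinearMap.sub_apply]⟩
    rw [hset]
    exact hd
  -- powers tend to 0 everywhere
  have hT0 : ∀ w : H, Tendsto (fun k : ℕ => (T ^ k) w) atTop (nhds 0) := by
    intro w
    rw [NormedAddCommGroup.tendsto_nhds_zero]
    intro ε hε
    have hw : w ∈ closure (Set.range fun u : H => u - T u) := hdense w
    rw [Metric.mem_closure_iff] at hw
    obtain ⟨b, hb, hbd⟩ := hw (ε / 2) (by linarith)
    obtain ⟨u, rfl⟩ := hb
    have h1 : ∀ᶠ k : ℕ in atTop, ‖(T ^ k) (u - T u)‖ < ε / 2 := by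
      have := hrange u
      rw [NormedAddCommGroup.tendsto_nhds_zero] at this
      exact this (ε / 2) (by linarith)
    filter_upwards [h1] with k hk
    have : ‖(T ^ k) w‖ ≤ ‖(T ^ k) (w - (u - T u))‖ + ‖(T ^ k) (u - T u)‖ := by
      calc ‖(T ^ k) w‖ = ‖(T ^ k) (w - (u - T u)) + (T ^ k) (u - T u)‖ := by
            rw [← map_add, sub_add_cancel]
        _ ≤ _ := norm_add_le _ _
    have h2 : ‖(T ^ k) (w - (u - T u))‖ ≤ ‖w - (u - T u)‖ := hnorm k _
    have h3 : ‖w - (u - T u)‖ < ε / 2 := by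
      rw [dist_eq_norm] at hbd
      exact hbd
    linarith
  -- the iterate formula
  have hiter : ∀ (x₀ : H) (k : ℕ),
      (fun x => T x + z)^[k] x₀ = (T ^ k) (x₀ - xbar) + xbar := by
    intro x₀ k
    induction k with
    | zero => simp
    | succ n ih =>
        rw [Function.iterate_succ_apply', ih]
        rw [pow_succ', ContinuousLinearMap.mul_apply]
        rw [map_add, map_sub]
        nth_rewrite 4 [hfix]
        rw [map_sub]
        abel
  intro x₀
  have := (hT0 (x₀ - xbar)).add_const xbar
  rw [zero_add] at this
  convert this using 2 with k
  exact hiter x₀ k
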